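/- Let b' : ℝ^{2(n+1)} → ℝ^k and define φ = ∑_j α_j b_j ⟨ξ⟩_γ^{-1} with fixed constants α_j, and ω = √(φ² + ⟨ξ⟩_γ^{-2δ}). Suppose |φ|² ≤ C₀ |b'|² ⟨ξ⟩_γ^{-2}. Then for any ε > 0: |b'|² + ε²ω^{-2}⟨ξ⟩_γ^{2κ} ≥ c ε² ω² ⟨ξ⟩_γ² for some c > 0 depending only on C₀, where κ = ρ − δ and ρ + δ = 1. -/

import Mathlib

set_option maxHeartbeats 1000000 in
/-- key algebraic inequality in the proof of Lemma 6.1: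
`|b'|² + ε²ω⁻²⟨ξ⟩^{2κ} ≥ c ε² ω² ⟨ξ⟩²` with `c > 0` depending only on `C₀`.
Here `B = |b'|`, `X = ⟨ξ⟩_γ`, `ω = √(φ² + X^{-2δ})`, `φ² ≤ C₀ B² X⁻²`. -/
theorem stmt_16 (C₀ : ℝ) (hC₀ : 0 < C₀) :
    ∃ c > (0 : ℝ), ∀ (δ ρ κ : ℝ), 0 < δ → δ < ρ → ρ < 1 → ρ + δ = 1 → κ = ρ - δ →
      ∀ (B X φ ω ε : ℝ), 0 ≤ B → 1 ≤ X → 0 < ε → ε ≤ 1 →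
        ω = Real.sqrt (φ ^ 2 + X ^ (-(2 * δ))) →
        φ ^ 2 ≤ C₀ * B ^ 2 * X ^ (-(2 : ℝ)) →
        c * ε ^ 2 * ω ^ 2 * X ^ (2 : ℝ) ≤
          B ^ 2 + ε ^ 2 * ω⁻¹ ^ 2 * X ^ (2 * κ) := by
  set c : ℝ := 1 / (2 * C₀ + 2) with hc
  have hc0 : 0 < c := by positivity
  refine ⟨c, hc0, ?_⟩
  intro δ ρ κ hδ hδρ hρ hsum hκ B X φ ω ε hB hX hε hε1 hω hφ
  have hX0 : (0:ℝ) < X := lt_of_lt_of_le one_pos hX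
  set T := X ^ (-(2 * δ)) with hT
  have hT0 : 0 < T := Real.rpow_pos_of_pos hX0 _
  have hω2 : ω ^ 2 = φ ^ 2 + T := by
    rw [hω, Real.sq_sqrt]; positivity
  have hω0 : 0 < ω := by
    rw [hω]; exact Real.sqrt_pos.mpr (by positivity)
  have hX2 : (0:ℝ) < X ^ (2:ℝ) := Real.rpow_pos_of_pos hX0 _
  have hXn : (0:ℝ) < X ^ (-(2:ℝ)) := Real.rpow_pos_of_pos hX0 _
  have hXκ : (0:ℝ) < X ^ (2 * κ) := Real.rpow_pos_of_pos hX0 _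
  have h1 : X ^ (-(2:ℝ)) * X ^ (2:ℝ) = 1 := by
    rw [← Real.rpow_add hX0]; norm_num
  have h2 : T * T * X ^ (2:ℝ) = X ^ (2 * κ) := by
    rw [hT, ← Real.rpow_add hX0, ← Real.rpow_add hX0]
    congr 1; linarith
  have hφω : φ ^ 2 ≤ ω ^ 2 := by nlinarith
  have hkey : (ω ^ 2) ^ 2 ≤ 2 * (C₀ * B ^ 2 * X ^ (-(2:ℝ))) * ω ^ 2 + 2 * T * T := by
    nlinarith [sq_nonneg (φ ^ 2 - T), sq_nonneg φ]
  have hnn : (0:ℝ) ≤ c * ε ^ 2 * X ^ (2:ℝ) := by positivity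
  have h3 := mul_le_mul_of_nonneg_left hkey hnn
  -- rewrite products
  have h4 : c * ε ^ 2 * X ^ (2:ℝ) *
      (2 * (C₀ * B ^ 2 * X ^ (-(2:ℝ))) * ω ^ 2 + 2 * T * T)
      = 2 * c * C₀ * ε ^ 2 * B ^ 2 * ω ^ 2 * (X ^ (-(2:ℝ)) * X ^ (2:ℝ))
        + 2 * c * ε ^ 2 * (T * T * X ^ (2:ℝ)) := by ring
  rw [h4, h1, h2] at h3
  have h2cC0 : 2 * c * C₀ ≤ 1 := by
    have h : (2 * C₀) / (2 * C₀ + 2) ≤ 1 := by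
      rw [div_le_one (by positivity)]; linarith
    calc 2 * c * C₀ = (2 * C₀) / (2 * C₀ + 2) := by rw [hc]; ring
      _ ≤ 1 := h
  have h2c : 2 * c ≤ 1 := by
    have h : (2 : ℝ) / (2 * C₀ + 2) ≤ 1 := by
      rw [div_le_one (by positivity)]; linarith
    calc 2 * c = (2 : ℝ) / (2 * C₀ + 2) := by rw [hc]; ring
      _ ≤ 1 := h
  have hε2 : ε ^ 2 ≤ 1 := by nlinarith
  have hq1 : (0:ℝ) ≤ 2 * c * C₀ := by positivity
  have hq : 2 * c * C₀ * ε ^ 2 ≤ 1 := by nlinarith [sq_nonneg ε]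
  have t1 : 2 * c * C₀ * ε ^ 2 * B ^ 2 * ω ^ 2 * 1 ≤ B ^ 2 * ω ^ 2 := by
    calc 2 * c * C₀ * ε ^ 2 * B ^ 2 * ω ^ 2 * 1
        = B ^ 2 * ω ^ 2 * (2 * c * C₀ * ε ^ 2) := by ring
      _ ≤ B ^ 2 * ω ^ 2 * 1 :=
          mul_le_mul_of_nonneg_left hq (mul_nonneg (sq_nonneg B) (sq_nonneg ω))
      _ = B ^ 2 * ω ^ 2 := by ring
  have t2 : 2 * c * ε ^ 2 * X ^ (2 * κ) ≤ ε ^ 2 * X ^ (2 * κ) := by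
    calc 2 * c * ε ^ 2 * X ^ (2 * κ)
        = ε ^ 2 * X ^ (2 * κ) * (2 * c) := by ring
      _ ≤ ε ^ 2 * X ^ (2 * κ) * 1 :=
          mul_le_mul_of_nonneg_left h2c (mul_nonneg (sq_nonneg ε) hXκ.le)
      _ = ε ^ 2 * X ^ (2 * κ) := by ring
  have h5 : c * ε ^ 2 * X ^ (2:ℝ) * (ω ^ 2) ^ 2 ≤ B ^ 2 * ω ^ 2 + ε ^ 2 * X ^ (2 * κ) := by
    linarith
  rw [inv_pow, ← mul_le_mul_iff_left₀ (pow_pos hω0 2)]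
  have hinv : (ω ^ 2)⁻¹ * ω ^ 2 = 1 := inv_mul_cancel₀ (by positivity)
  calc c * ε ^ 2 * ω ^ 2 * X ^ (2:ℝ) * ω ^ 2
      = c * ε ^ 2 * X ^ (2:ℝ) * (ω ^ 2) ^ 2 := by ring
    _ ≤ B ^ 2 * ω ^ 2 + ε ^ 2 * X ^ (2 * κ) := h5
    _ = B ^ 2 * ω ^ 2 + ε ^ 2 * ((ω ^ 2)⁻¹ * ω ^ 2) * X ^ (2 * κ) := by rw [hinv]; ring
    _ = (B ^ 2 + ε ^ 2 * (ω ^ 2)⁻¹ * X ^ (2 * κ)) * ω ^ 2 := by ring
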